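/- Let 𝓑 ⊆ 2^V \ {V} be a Sperner family of nonempty sets with ⋃_{B∈𝓑} B = V, ⋂_{B∈𝓑} B = ∅, |𝓑| = m, |V| = n, and let δ be the size of a smallest member of 𝓑. Then OPT_*(𝓑) ≥ m for every measure * ∈ {B, BA, TA, C, BC, L}; OPT_*(𝓑) ≥ n for every * ∈ {TA, C, BC, L}; and OPT_L(𝓑) ≥ max{n(δ+1), 2m}. -/

import Mathlib

open Finset

variable {V : Type*} [Fintype V] [DecidableEq V]

/-- A pure Horn CNF is a finite set of clauses `(B, v)`: body `B`, head `v`,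
with `B` nonempty and `v ∉ B`. -/
def PureHorn (Φ : Finset (Finset V × V)) : Prop :=
  ∀ c ∈ Φ, c.1.Nonempty ∧ c.2 ∉ c.1

/-- A set `W` is closed under the clauses of `Φ`. -/
def HornClosed (Φ : Finset (Finset V × V)) (W : Set V) : Prop :=
  ∀ c ∈ Φ, ↑c.1 ⊆ W → c.2 ∈ W

/-- Forward-chaining closure `F_Φ(Z)`: the smallest set containing `Z`
that is closed under the clauses of `Φ`. -/
def hornClosure (Φ : Finset (Finset V × V)) (Z : Set V) : Set V :=
  ⋂₀ {W : Set V | Z ⊆ W ∧ HornClosed Φ W}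

/-- `Ψ_𝓑 = ⋀_{B ∈ 𝓑} B → (V \ B)`. -/
def keyCNF (𝓑 : Finset (Finset V)) : Finset (Finset V × V) :=
  𝓑.biUnion fun B => (Finset.univ \ B).image fun v => (B, v)

/-- `Φ` represents the key Horn function `h_𝓑`, i.e. `Φ` is a pure Horn CNF
equivalent to `Ψ_𝓑`. -/
def Represents (𝓑 : Finset (Finset V)) (Φ : Finset (Finset V × V)) : Prop :=
  PureHorn Φ ∧ ∀ Z : Finset V, hornClosure Φ ↑Z = hornClosure (keyCNF 𝓑) ↑Z

/-- (B) number of (distinct) bodies. -/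
def sizeB (Φ : Finset (Finset V × V)) : ℕ := (Φ.image Prod.fst).card
/-- (BA) body area `Σ_i |B_i|` over the distinct bodies. -/
def sizeBA (Φ : Finset (Finset V × V)) : ℕ := ∑ B ∈ Φ.image Prod.fst, B.card
/-- (C) number of clauses `Σ_i |H_i|`. -/
def sizeC (Φ : Finset (Finset V × V)) : ℕ := Φ.card
/-- (TA) total area `Σ_i (|B_i| + |H_i|)`. -/
def sizeTA (Φ : Finset (Finset V × V)) : ℕ := sizeBA Φ + sizeC Φ
/-- (BC) bodies plus clauses `Σ_i (|H_i| + 1)`. -/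
def sizeBC (Φ : Finset (Finset V × V)) : ℕ := sizeB Φ + sizeC Φ
/-- (L) number of literals `Σ_i (|B_i| + 1)·|H_i|`. -/
def sizeL (Φ : Finset (Finset V × V)) : ℕ := ∑ c ∈ Φ, (c.1.card + 1)

/-- `μ` is one of the six size measures. -/
def IsMeasure (μ : Finset (Finset V × V) → ℕ) : Prop :=
  μ = sizeB ∨ μ = sizeBA ∨ μ = sizeTA ∨ μ = sizeC ∨ μ = sizeBC ∨ μ = sizeL

/-- `OPT_μ(𝓑)`: minimum `μ`-size of a CNF representing `h_𝓑`. -/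
noncomputable def OPT (μ : Finset (Finset V × V) → ℕ) (𝓑 : Finset (Finset V)) : ℕ :=
  sInf {s : ℕ | ∃ Φ : Finset (Finset V × V), Represents 𝓑 Φ ∧ μ Φ = s}

/-- `price_μ(S,T)`: minimum `μ`-size of a pure Horn CNF with bodies in `𝓑`
whose forward chaining from `S` reaches all of `T`. -/
noncomputable def price (μ : Finset (Finset V × V) → ℕ) (𝓑 : Finset (Finset V))
    (S T : Finset V) : ℕ :=
  sInf {s : ℕ | ∃ Φ : Finset (Finset V × V),
    PureHorn Φ ∧ (∀ c ∈ Φ, c.1 ∈ 𝓑) ∧ ↑T ⊆ hornClosure Φ ↑S ∧ μ Φ = s}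

section Aux

variable {𝓑 : Finset (Finset V)} {Φ : Finset (Finset V × V)}

lemma subset_hornClosure (Φ : Finset (Finset V × V)) (Z : Set V) :
    Z ⊆ hornClosure Φ Z := fun _ hv => Set.mem_sInter.2 fun _ hW => hW.1 hv

lemma hornClosed_hornClosure (Φ : Finset (Finset V × V)) (Z : Set V) :
    HornClosed Φ (hornClosure Φ Z) := by
  intro c hc hsub
  exact Set.mem_sInter.2 fun W hW => hW.2 c hc (hsub.trans (Set.sInter_subset_of_mem hW))

lemma hornClosure_min {Φ : Finset (Finset V × V)} {Z W : Set V}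
    (h1 : Z ⊆ W) (h2 : HornClosed Φ W) : hornClosure Φ Z ⊆ W :=
  Set.sInter_subset_of_mem ⟨h1, h2⟩

lemma mem_keyCNF {c : Finset V × V} :
    c ∈ keyCNF 𝓑 ↔ c.1 ∈ 𝓑 ∧ c.2 ∉ c.1 := by
  cases c with
  | mk B v =>
    simp only [keyCNF, Finset.mem_biUnion, Finset.mem_image, Finset.mem_sdiff,
      Finset.mem_univ, true_and, Prod.mk.injEq]
    constructor
    · rintro ⟨B', hB', v', hv', rfl, rfl⟩; exact ⟨hB', hv'⟩
    · rintro ⟨hB, hv⟩; exact ⟨B, hB, v, hv, rfl, rfl⟩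

lemma key_closure_univ {B : Finset V} (hB : B ∈ 𝓑) {Z : Finset V} (h : B ⊆ Z) :
    hornClosure (keyCNF 𝓑) ↑Z = Set.univ := by
  apply Set.eq_univ_of_forall
  intro v
  by_cases hv : v ∈ B
  · exact subset_hornClosure _ _ (by exact_mod_cast h hv)
  · exact hornClosed_hornClosure (keyCNF 𝓑) ↑Z (B, v) (mem_keyCNF.2 ⟨hB, hv⟩)
      ((Finset.coe_subset.2 h).trans (subset_hornClosure _ _))

lemma key_closure_self {Z : Finset V} (h : ∀ B ∈ 𝓑, ¬ B ⊆ Z) :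
    hornClosure (keyCNF 𝓑) ↑Z = ↑Z := by
  refine subset_antisymm (hornClosure_min subset_rfl ?_) (subset_hornClosure _ _)
  intro c hc hsub
  obtain ⟨hB, _⟩ := mem_keyCNF.mp hc
  exact absurd (Finset.coe_subset.1 hsub) (h c.1 hB)

variable (hrep : Represents 𝓑 Φ)
include hrep

/-- (a) every body of Φ contains a member of 𝓑. -/
lemma body_contains (c : Finset V × V) (hc : c ∈ Φ) : ∃ B ∈ 𝓑, B ⊆ c.1 := by
  by_contra h
  push_neg at h
  have hkey : hornClosure (keyCNF 𝓑) ↑c.1 = ↑c.1 := key_closure_self h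
  have hv : c.2 ∈ hornClosure Φ ↑c.1 :=
    hornClosed_hornClosure Φ ↑c.1 c hc (subset_hornClosure _ _)
  rw [hrep.2 c.1, hkey] at hv
  exact (hrep.1 c hc).2 (by exact_mod_cast hv)

/-- (b) for each B ∈ 𝓑, some body of Φ is contained in B. -/
lemma exists_body_subset (hproper : ∀ B ∈ 𝓑, B ≠ Finset.univ)
    {B : Finset V} (hB : B ∈ 𝓑) : ∃ c ∈ Φ, c.1 ⊆ B := by
  by_contra h
  push_neg at h
  have hclosed : HornClosed Φ ↑B := fun c hc hsub =>
    absurd (Finset.coe_subset.1 hsub) (h c hc)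
  have h1 : hornClosure Φ ↑B ⊆ ↑B := hornClosure_min subset_rfl hclosed
  have h2 : hornClosure Φ ↑B = Set.univ := by
    rw [hrep.2 B]; exact key_closure_univ hB subset_rfl
  rw [h2] at h1
  exact hproper B hB (Finset.eq_univ_iff_forall.2 fun v => by
    exact_mod_cast h1 (Set.mem_univ v))

/-- (c) every vertex is the head of some clause of Φ. -/
lemma exists_head (hinter : ∀ v : V, ∃ B ∈ 𝓑, v ∉ B) (v : V) :
    ∃ c ∈ Φ, c.2 = v := by
  obtain ⟨B, hB, hvB⟩ := hinter v
  have h2 : hornClosure Φ ↑B = Set.univ := by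
    rw [hrep.2 B]; exact key_closure_univ hB subset_rfl
  have hclosed : HornClosed Φ (↑B ∪ ↑(Φ.image Prod.snd)) := by
    intro c hc _
    exact Or.inr (by exact_mod_cast Finset.mem_image_of_mem Prod.snd hc)
  have h1 : hornClosure Φ ↑B ⊆ ↑B ∪ ↑(Φ.image Prod.snd) :=
    hornClosure_min Set.subset_union_left hclosed
  rw [h2] at h1
  rcases h1 (Set.mem_univ v) with h | h
  · exact absurd (by exact_mod_cast h) hvB
  · obtain ⟨c, hc, hcv⟩ := Finset.mem_image.1 (by exact_mod_cast h)
    exact ⟨c, hc, hcv⟩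

end Aux

/-- Lower bounds: `OPT_*(𝓑) ≥ m` for all six measures, `OPT_*(𝓑) ≥ n` for
`* ∈ {TA, C, BC, L}`, and `OPT_L(𝓑) ≥ max{n(δ+1), 2m}` where `δ` is the
size of a smallest body. -/
theorem stmt2 {V : Type*} [Fintype V] [DecidableEq V]
    (𝓑 : Finset (Finset V)) (m n δ : ℕ)
    (hm : 𝓑.card = m) (hn : Fintype.card V = n)
    (hne : ∀ B ∈ 𝓑, B.Nonempty) (hproper : ∀ B ∈ 𝓑, B ≠ Finset.univ)
    (hsperner : ∀ B ∈ 𝓑, ∀ B' ∈ 𝓑, B ⊆ B' → B = B')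
    (hcover : ∀ v : V, ∃ B ∈ 𝓑, v ∈ B)
    (hinter : ∀ v : V, ∃ B ∈ 𝓑, v ∉ B)
    (hδ : ∃ B ∈ 𝓑, B.card = δ ∧ ∀ B' ∈ 𝓑, δ ≤ B'.card) :
    (∀ μ : Finset (Finset V × V) → ℕ, IsMeasure μ → m ≤ OPT μ 𝓑) ∧
    (∀ μ : Finset (Finset V × V) → ℕ,
      (μ = sizeTA ∨ μ = sizeC ∨ μ = sizeBC ∨ μ = sizeL) → n ≤ OPT μ 𝓑) ∧
    max (n * (δ + 1)) (2 * m) ≤ OPT sizeL 𝓑 := by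
  have keyrep : Represents 𝓑 (keyCNF 𝓑) :=
    ⟨fun c hc => ⟨hne c.1 (mem_keyCNF.mp hc).1, (mem_keyCNF.mp hc).2⟩, fun _ => rfl⟩
  -- m ≤ sizeB
  have hB_lb : ∀ Φ, Represents 𝓑 Φ → m ≤ sizeB Φ := by
    intro Φ hrep
    rw [← hm]
    have hex : ∀ B : Finset V, ∃ B', B ∈ 𝓑 → B' ∈ Φ.image Prod.fst ∧ B' ⊆ B := by
      intro B
      by_cases hB : B ∈ 𝓑
      · obtain ⟨c, hc, hsub⟩ := exists_body_subset hrep hproper hB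
        exact ⟨c.1, fun _ => ⟨Finset.mem_image_of_mem _ hc, hsub⟩⟩
      · exact ⟨∅, fun h => absurd h hB⟩
    choose f hf using hex
    apply Finset.card_le_card_of_injOn f (fun B hB => (hf B hB).1)
    intro B1 h1 B2 h2 heq
    obtain ⟨c, hc, hc1⟩ := Finset.mem_image.1 (hf B1 h1).1
    obtain ⟨B'', hB'', hsub⟩ := body_contains hrep c hc
    rw [hc1] at hsub
    have e1 : B'' = B1 := hsperner _ hB'' _ h1 (hsub.trans (hf B1 h1).2)
    have e2 : B'' = B2 := hsperner _ hB'' _ h2 (by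
      rw [heq] at hsub; exact hsub.trans (hf B2 h2).2)
    rw [← e1, ← e2]
  -- n ≤ sizeC
  have hC_lb : ∀ Φ, Represents 𝓑 Φ → n ≤ sizeC Φ := by
    intro Φ hrep
    rw [← hn, ← Finset.card_univ]
    have himg : (Φ.image Prod.snd) = Finset.univ := Finset.eq_univ_iff_forall.2 fun v => by
      obtain ⟨c, hc, hcv⟩ := exists_head hrep hinter v
      exact Finset.mem_image.2 ⟨c, hc, hcv⟩
    rw [← himg]
    exact Finset.card_image_le
  -- comparisons
  have hBle : ∀ Φ : Finset (Finset V × V), sizeB Φ ≤ sizeC Φ :=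
    fun Φ => by unfold sizeB sizeC; exact Finset.card_image_le
  have hBBA : ∀ Φ : Finset (Finset V × V), PureHorn Φ → sizeB Φ ≤ sizeBA Φ := by
    intro Φ hp
    unfold sizeB sizeBA
    calc (Φ.image Prod.fst).card = ∑ _B ∈ Φ.image Prod.fst, 1 := by simp
      _ ≤ ∑ B ∈ Φ.image Prod.fst, B.card := Finset.sum_le_sum fun B hB => by
          obtain ⟨c, hc, rfl⟩ := Finset.mem_image.1 hB
          exact Finset.card_pos.2 (hp c hc).1
  have hCL : ∀ Φ : Finset (Finset V × V), sizeC Φ ≤ sizeL Φ := by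
    intro Φ
    unfold sizeC sizeL
    calc Φ.card = ∑ _c ∈ Φ, 1 := by simp
      _ ≤ ∑ c ∈ Φ, (c.1.card + 1) := Finset.sum_le_sum fun c _ => Nat.le_add_left _ _
  -- sizeL bounds
  obtain ⟨B₀, hB₀, hδcard, hδmin⟩ := hδ
  have hL2 : ∀ Φ, Represents 𝓑 Φ → n * (δ + 1) ≤ sizeL Φ := by
    intro Φ hrep
    have hterm : ∀ c ∈ Φ, δ + 1 ≤ c.1.card + 1 := by
      intro c hc
      obtain ⟨B, hB, hsub⟩ := body_contains hrep c hc
      exact Nat.succ_le_succ ((hδmin B hB).trans (Finset.card_le_card hsub))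
    calc n * (δ + 1) ≤ Φ.card * (δ + 1) := Nat.mul_le_mul_right _ (hC_lb Φ hrep)
      _ = Φ.card • (δ + 1) := (smul_eq_mul _ _).symm
      _ ≤ ∑ c ∈ Φ, (c.1.card + 1) := Finset.card_nsmul_le_sum Φ _ _ hterm
  have hL3 : ∀ Φ, Represents 𝓑 Φ → 2 * m ≤ sizeL Φ := by
    intro Φ hrep
    have hterm : ∀ c ∈ Φ, 2 ≤ c.1.card + 1 := fun c hc =>
      Nat.succ_le_succ (Finset.card_pos.2 (hrep.1 c hc).1)
    calc 2 * m = m * 2 := Nat.mul_comm _ _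
      _ ≤ Φ.card * 2 := Nat.mul_le_mul_right _ ((hB_lb Φ hrep).trans (hBle Φ))
      _ = Φ.card • 2 := (smul_eq_mul _ _).symm
      _ ≤ ∑ c ∈ Φ, (c.1.card + 1) := Finset.card_nsmul_le_sum Φ _ _ hterm
  -- general OPT lower bound
  have hOPT : ∀ (k : ℕ) (μ : Finset (Finset V × V) → ℕ),
      (∀ Φ, Represents 𝓑 Φ → k ≤ μ Φ) → k ≤ OPT μ 𝓑 := by
    intro k μ h
    have hnonempty : {s : ℕ | ∃ Φ : Finset (Finset V × V),
        Represents 𝓑 Φ ∧ μ Φ = s}.Nonempty := ⟨μ (keyCNF 𝓑), keyCNF 𝓑, keyrep, rfl⟩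
    refine le_csInf hnonempty ?_
    rintro s ⟨Φ, hrep, rfl⟩
    exact h Φ hrep
  refine ⟨?_, ?_, ?_⟩
  · rintro μ (rfl | rfl | rfl | rfl | rfl | rfl)
    · exact hOPT m _ hB_lb
    · exact hOPT m _ fun Φ hrep => (hB_lb Φ hrep).trans (hBBA Φ hrep.1)
    · exact hOPT m _ fun Φ hrep =>
        ((hB_lb Φ hrep).trans (hBBA Φ hrep.1)).trans (Nat.le_add_right _ _)
    · exact hOPT m _ fun Φ hrep => (hB_lb Φ hrep).trans (hBle Φ)
    · exact hOPT m _ fun Φ hrep => (hB_lb Φ hrep).trans (Nat.le_add_right _ _)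
    · exact hOPT m _ fun Φ hrep => ((hB_lb Φ hrep).trans (hBle Φ)).trans (hCL Φ)
  · rintro μ (rfl | rfl | rfl | rfl)
    · exact hOPT n _ fun Φ hrep => (hC_lb Φ hrep).trans (Nat.le_add_left _ _)
    · exact hOPT n _ hC_lb
    · exact hOPT n _ fun Φ hrep => (hC_lb Φ hrep).trans (Nat.le_add_left _ _)
    · exact hOPT n _ fun Φ hrep => (hC_lb Φ hrep).trans (hCL Φ)
  · exact max_le (hOPT _ _ hL2) (hOPT _ _ hL3)
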